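/- Let H be the reduced weighted Laplacian of a connected graph G with positive edge weights, U an independent set of internal nodes, and S the Schur complement (Kron reduction) of H eliminating U. If i, j ∈ U_c satisfy (ij) ∈ E and have no common neighbor in U, then the diagonal entries of S satisfy S(i,i) ≥ β_{ij} and S(j,j) ≥ β_{ij}. -/

import Mathlib

open Finset

/-- The weighted Laplacian of a graph `G` on `Fin n` with edge weights `β`. -/
noncomputable def weightedLaplacian {n : ℕ} (G : SimpleGraph (Fin n)) [DecidableRel G.Adj]
    (β : Fin n → Fin n → ℝ) : Matrix (Fin n) (Fin n) ℝ :=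
  fun i j =>
    if i = j then ∑ k ∈ univ.filter (G.Adj i ·), β i k
    else if G.Adj i j then -β i j else 0

/-- The reduced weighted Laplacian: remove the row and column of the reference node `r`. -/
noncomputable def reducedLaplacian {n : ℕ} (G : SimpleGraph (Fin n)) [DecidableRel G.Adj]
    (β : Fin n → Fin n → ℝ) (r : Fin n) :
    Matrix {v : Fin n // v ≠ r} {v : Fin n // v ≠ r} ℝ :=
  (weightedLaplacian G β).submatrix (·.1) (·.1)

/-- The Schur complement (Kron reduction) of the reduced Laplacian, eliminating the node
set `U`:  `S = H^{U_c U_c} − H^{U_c U} (H^{UU})⁻¹ H^{U U_c}`. -/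
noncomputable def kronReduction {n : ℕ} (G : SimpleGraph (Fin n)) [DecidableRel G.Adj]
    (β : Fin n → Fin n → ℝ) (r : Fin n) (U : Finset {v : Fin n // v ≠ r}) :
    Matrix {v : {v : Fin n // v ≠ r} // v ∉ U} {v : {v : Fin n // v ≠ r} // v ∉ U} ℝ :=
  (Matrix.of fun i j : {v : {v : Fin n // v ≠ r} // v ∉ U} =>
      reducedLaplacian G β r i.1 j.1) -
    (Matrix.of fun (i : {v : {v : Fin n // v ≠ r} // v ∉ U})
        (u : {v : {v : Fin n // v ≠ r} // v ∈ U}) => reducedLaplacian G β r i.1 u.1) *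
      (Matrix.of fun u w : {v : {v : Fin n // v ≠ r} // v ∈ U} =>
        reducedLaplacian G β r u.1 w.1)⁻¹ *
      (Matrix.of fun (u : {v : {v : Fin n // v ≠ r} // v ∈ U})
        (j : {v : {v : Fin n // v ≠ r} // v ∉ U}) => reducedLaplacian G β r u.1 j.1)

lemma kron_aux
    {n : ℕ} (G : SimpleGraph (Fin (n + 1))) [DecidableRel G.Adj]
    (β : Fin (n + 1) → Fin (n + 1) → ℝ)
    (hsym : ∀ i j, β i j = β j i)
    (hpos : ∀ i j, G.Adj i j → 0 < β i j)
    (r : Fin (n + 1))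
    (U : Finset {v : Fin (n + 1) // v ≠ r})
    (hind : ∀ u ∈ U, ∀ w ∈ U, ¬ G.Adj u.1 w.1)
    (hdeg : ∀ u ∈ U, 2 ≤ G.degree u.1)
    (i j : {v : {v : Fin (n + 1) // v ≠ r} // v ∉ U})
    (hadj : G.Adj i.1.1 j.1.1) :
    β i.1.1 j.1.1 ≤ kronReduction G β r U i i := by
  classical
  set d : {v : {v : Fin (n + 1) // v ≠ r} // v ∈ U} → ℝ :=
    fun u => ∑ k ∈ univ.filter (G.Adj u.1.1 ·), β u.1.1 k with hd
  -- positivity of d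
  have hdpos : ∀ u, 0 < d u := by
    intro u
    have hne : (univ.filter (G.Adj u.1.1 ·)).Nonempty := by
      rw [← SimpleGraph.neighborFinset_eq_filter]
      have := hdeg u.1 u.2
      rw [← SimpleGraph.card_neighborFinset_eq_degree] at this
      exact Finset.card_pos.mp (by omega)
    exact Finset.sum_pos (fun k hk => hpos _ _ (by simpa using hk)) hne
  -- the U-U block is diagonal
  have hMdiag : (Matrix.of fun u w : {v : {v : Fin (n + 1) // v ≠ r} // v ∈ U} =>
      reducedLaplacian G β r u.1 w.1) = Matrix.diagonal d := by
    ext u w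
    by_cases huw : u = w
    · subst huw
      simp [reducedLaplacian, weightedLaplacian, Matrix.diagonal, hd]
    · have h1 : u.1.1 ≠ w.1.1 := by
        intro h
        exact huw (Subtype.ext (Subtype.ext h))
      have h2 : ¬ G.Adj u.1.1 w.1.1 := hind u.1 u.2 w.1 w.2
      simp [reducedLaplacian, weightedLaplacian, Matrix.diagonal, h1, h2, huw]
  have hMinv : (Matrix.of fun u w : {v : {v : Fin (n + 1) // v ≠ r} // v ∈ U} =>
      reducedLaplacian G β r u.1 w.1)⁻¹ = Matrix.diagonal (fun u => (d u)⁻¹) := by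
    rw [hMdiag, Matrix.inv_diagonal]
    letI : Invertible d :=
      ⟨fun u => (d u)⁻¹, funext fun u => by
          simp [inv_mul_cancel₀ (ne_of_gt (hdpos u))],
        funext fun u => by
          simp [mul_inv_cancel₀ (ne_of_gt (hdpos u))]⟩
    rw [Ring.inverse_invertible d]
    rfl
  -- compute the quadratic term
  have hQ : ((Matrix.of fun (a : {v : {v : Fin (n + 1) // v ≠ r} // v ∉ U})
        (u : {v : {v : Fin (n + 1) // v ≠ r} // v ∈ U}) => reducedLaplacian G β r a.1 u.1) *
      (Matrix.of fun u w : {v : {v : Fin (n + 1) // v ≠ r} // v ∈ U} =>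
        reducedLaplacian G β r u.1 w.1)⁻¹ *
      (Matrix.of fun (u : {v : {v : Fin (n + 1) // v ≠ r} // v ∈ U})
        (a : {v : {v : Fin (n + 1) // v ≠ r} // v ∉ U}) => reducedLaplacian G β r u.1 a.1)) i i
      = ∑ u : {v : {v : Fin (n + 1) // v ≠ r} // v ∈ U},
          (if G.Adj i.1.1 u.1.1 then β i.1.1 u.1.1 * β i.1.1 u.1.1 * (d u)⁻¹ else 0) := by
    rw [hMinv]
    rw [Matrix.mul_assoc, Matrix.mul_apply]
    congr 1
    ext u
    rw [Matrix.diagonal_mul]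
    have hiu : i.1.1 ≠ u.1.1 := by
      intro h
      exact i.2 (by rw [show i.1 = u.1 from Subtype.ext h]; exact u.2)
    have hui : u.1.1 ≠ i.1.1 := fun h => hiu h.symm
    by_cases ha : G.Adj i.1.1 u.1.1
    · have ha' : G.Adj u.1.1 i.1.1 := ha.symm
      simp [reducedLaplacian, weightedLaplacian, hiu, hui, ha, ha', hsym u.1.1 i.1.1]
      ring
    · have ha' : ¬ G.Adj u.1.1 i.1.1 := fun h => ha h.symm
      simp [reducedLaplacian, weightedLaplacian, hiu, hui, ha, ha']
  -- bound each term of the quadratic sum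
  have hterm : ∀ u : {v : {v : Fin (n + 1) // v ≠ r} // v ∈ U},
      (if G.Adj i.1.1 u.1.1 then β i.1.1 u.1.1 * β i.1.1 u.1.1 * (d u)⁻¹ else 0)
        ≤ (if G.Adj i.1.1 u.1.1 then β i.1.1 u.1.1 else 0) := by
    intro u
    by_cases ha : G.Adj i.1.1 u.1.1
    · simp only [ha, if_true]
      have hb : 0 < β i.1.1 u.1.1 := hpos _ _ ha
      have hdu : β i.1.1 u.1.1 ≤ d u := by
        rw [hd, hsym i.1.1 u.1.1]
        exact Finset.single_le_sum (f := fun k => β u.1.1 k)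
          (fun k hk => le_of_lt (hpos _ _ (by simpa using hk)))
          (by simp [ha.symm])
      calc β i.1.1 u.1.1 * β i.1.1 u.1.1 * (d u)⁻¹
          = β i.1.1 u.1.1 * β i.1.1 u.1.1 / d u := by ring
        _ ≤ β i.1.1 u.1.1 * β i.1.1 u.1.1 / β i.1.1 u.1.1 :=
            div_le_div_of_nonneg_left (by positivity) hb hdu
        _ = β i.1.1 u.1.1 := by field_simp
    · simp [ha]
  -- the sum of adjacent-in-U weights is at most H(i,i) - β i j
  have hsum : (∑ u : {v : {v : Fin (n + 1) // v ≠ r} // v ∈ U},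
        (if G.Adj i.1.1 u.1.1 then β i.1.1 u.1.1 else 0))
      ≤ (∑ k ∈ univ.filter (G.Adj i.1.1 ·), β i.1.1 k) - β i.1.1 j.1.1 := by
    have e1 : (∑ u : {v : {v : Fin (n + 1) // v ≠ r} // v ∈ U},
        (if G.Adj i.1.1 u.1.1 then β i.1.1 u.1.1 else 0))
        = ∑ u ∈ U, (if G.Adj i.1.1 u.1 then β i.1.1 u.1 else 0) :=
      Finset.sum_coe_sort U (fun u => if G.Adj i.1.1 u.1 then β i.1.1 u.1 else 0)
    rw [e1, ← Finset.sum_filter]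
    set s : Finset {v : Fin (n + 1) // v ≠ r} := U.filter (fun u => G.Adj i.1.1 u.1) with hs
    have e2 : (∑ u ∈ s, β i.1.1 u.1) = ∑ k ∈ s.image (·.1), β i.1.1 k := by
      rw [Finset.sum_image]
      intro x _ y _ h
      exact Subtype.ext h
    rw [e2]
    have hjnot : j.1.1 ∉ s.image (·.1) := by
      intro h
      obtain ⟨x, hx, hxe⟩ := Finset.mem_image.mp h
      have : j.1 = x := Subtype.ext hxe.symm
      exact j.2 (this ▸ (Finset.mem_filter.mp hx).1)
    have hsub : insert j.1.1 (s.image (·.1)) ⊆ univ.filter (G.Adj i.1.1 ·) := by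
      intro k hk
      rcases Finset.mem_insert.mp hk with h | h
      · subst h; simp [hadj]
      · obtain ⟨x, hx, hxe⟩ := Finset.mem_image.mp h
        subst hxe
        simp [(Finset.mem_filter.mp hx).2]
    have := Finset.sum_le_sum_of_subset_of_nonneg (f := fun k => β i.1.1 k) hsub
      (fun k hk _ => le_of_lt (hpos _ _ (by simpa using hk)))
    rw [Finset.sum_insert hjnot] at this
    linarith
  -- put it together
  have hS : kronReduction G β r U i i
      = (∑ k ∈ univ.filter (G.Adj i.1.1 ·), β i.1.1 k)
        - ∑ u : {v : {v : Fin (n + 1) // v ≠ r} // v ∈ U},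
            (if G.Adj i.1.1 u.1.1 then β i.1.1 u.1.1 * β i.1.1 u.1.1 * (d u)⁻¹ else 0) := by
    rw [kronReduction, Matrix.sub_apply, hQ]
    simp [reducedLaplacian, weightedLaplacian]
  rw [hS]
  have h1 := Finset.sum_le_sum (fun u (_ : u ∈ (univ : Finset _)) => hterm u)
  linarith

/-- if `i, j ∈ U_c` satisfy `(ij) ∈ E` and have no common neighbor in `U`, then
the diagonal entries of the Kron reduction satisfy `S(i,i) ≥ β_{ij}` and `S(j,j) ≥ β_{ij}`. -/
theorem kronReduction_diag_ge_edge_weight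
    {n : ℕ} (G : SimpleGraph (Fin (n + 1))) [DecidableRel G.Adj]
    (β : Fin (n + 1) → Fin (n + 1) → ℝ)
    (hsym : ∀ i j, β i j = β j i)
    (hpos : ∀ i j, G.Adj i j → 0 < β i j)
    (hconn : G.Connected)
    (r : Fin (n + 1))
    (U : Finset {v : Fin (n + 1) // v ≠ r})
    (hind : ∀ u ∈ U, ∀ w ∈ U, ¬ G.Adj u.1 w.1)
    (hdeg : ∀ u ∈ U, 2 ≤ G.degree u.1)
    (i j : {v : {v : Fin (n + 1) // v ≠ r} // v ∉ U})
    (hadj : G.Adj i.1.1 j.1.1)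
    (hnc : ¬ ∃ u ∈ U, G.Adj i.1.1 u.1 ∧ G.Adj j.1.1 u.1) :
    β i.1.1 j.1.1 ≤ kronReduction G β r U i i ∧
      β i.1.1 j.1.1 ≤ kronReduction G β r U j j := by
  refine ⟨kron_aux G β hsym hpos r U hind hdeg i j hadj, ?_⟩
  have h := kron_aux G β hsym hpos r U hind hdeg j i hadj.symm
  rwa [hsym j.1.1 i.1.1] at h
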